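/- Let G be a connected graph with κ(G) = δ(G) ≥ 1, n ≥ 3, and let S ⊆ V(G × Kₙ) with |S| = (n−1)δ(G) such that every fiber S_i = {u_i} × V(Kₙ) meets the complement (S_i − S ≠ ∅) and G × Kₙ − S has no isolated vertex. Define the quotient graph G* with vertices S_i' = S_i − S and S_i' adjacent to S_j' iff some edge of G × Kₙ − S joins S_i' to S_j'. Then G* is connected. -/

import Mathlib

open SimpleGraph

/-- The Kronecker (tensor) product of two simple graphs. -/
def tensorProd {α β : Type*} (G : SimpleGraph α) (H : SimpleGraph β) : SimpleGraph (α × β) where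
  Adj p q := G.Adj p.1 q.1 ∧ H.Adj p.2 q.2
  symm := ⟨fun p q h => ⟨G.symm.symm _ _ h.1, H.symm.symm _ _ h.2⟩⟩
  loopless := ⟨fun p h => G.loopless.irrefl p.1 h.1⟩

instance {α β : Type*} (G : SimpleGraph α) (H : SimpleGraph β)
    [DecidableRel G.Adj] [DecidableRel H.Adj] : DecidableRel (tensorProd G H).Adj :=
  fun _ _ => instDecidableAnd

/-- `S` is a separating set of `G`: deleting `S` leaves a single vertex or a
disconnected (possibly empty) graph. -/
def IsSeparating {V : Type*} (G : SimpleGraph V) (S : Set V) : Prop :=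
  Sᶜ.ncard = 1 ∨ ¬ (G.induce Sᶜ).Connected

/-- The vertex connectivity `κ(G)`: the minimum cardinality of a separating set. -/
noncomputable def kappa {V : Type*} [Fintype V] (G : SimpleGraph V) : ℕ :=
  sInf {k | ∃ S : Set V, IsSeparating G S ∧ S.ncard = k}

/-- A graph is super-connected (super-κ) if every minimum separating set is the
neighborhood of some vertex. -/
def SuperK {V : Type*} [Fintype V] (G : SimpleGraph V) : Prop :=
  ∀ S : Set V, IsSeparating G S → S.ncard = kappa G → ∃ v, S = G.neighborSet v

theorem stmt16 {α : Type*} [Fintype α] [Nonempty α] (G : SimpleGraph α) [DecidableRel G.Adj]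
    (hconn : G.Connected) (hk : kappa G = G.minDegree) (hd : 1 ≤ G.minDegree)
    (n : ℕ) (hn : 3 ≤ n) (S : Set (α × Fin n))
    (hcard : S.ncard = (n - 1) * G.minDegree)
    (hfiber : ∀ u : α, ∃ v : Fin n, (u, v) ∉ S)
    (hniso : ∀ x ∉ S, ∃ y ∉ S, (tensorProd G (⊤ : SimpleGraph (Fin n))).Adj x y) :
    (SimpleGraph.fromRel (fun u u' : α =>
      ∃ x y : α × Fin n, x ∉ S ∧ y ∉ S ∧ x.1 = u ∧ y.1 = u' ∧
        (tensorProd G (⊤ : SimpleGraph (Fin n))).Adj x y)).Connected := by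
  classical
  set Gs : SimpleGraph α := SimpleGraph.fromRel (fun u u' : α =>
      ∃ x y : α × Fin n, x ∉ S ∧ y ∉ S ∧ x.1 = u ∧ y.1 = u' ∧
        (tensorProd G (⊤ : SimpleGraph (Fin n))).Adj x y) with hGs
  set δ := G.minDegree with hδdef
  set A : α → Set (Fin n) := fun u => {v | (u, v) ∉ S} with hAdef
  have hAne : ∀ u, (A u).Nonempty := fun u => hfiber u
  set T : Set α := {u | (A u).ncard ≤ 1} with hTdef
  have hnotT : ∀ u, u ∉ T → 1 < (A u).ncard := by
    intro u hu
    simp only [hTdef, Set.mem_setOf_eq, not_le] at hu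
    exact hu
  -- transfer lemma
  have transfer : ∀ u w, G.Adj u w → w ∉ T → Gs.Adj u w := by
    intro u w hadj hw
    obtain ⟨v, hv⟩ := hAne u
    obtain ⟨v', hv', hne⟩ := Set.exists_ne_of_one_lt_ncard (hnotT w hw) v
    rw [hGs, SimpleGraph.fromRel_adj]
    refine ⟨hadj.ne, Or.inl ⟨(u, v), (w, v'), hv, hv', rfl, rfl, ?_⟩⟩
    exact ⟨hadj, hne.symm⟩
  -- counting : T.ncard ≤ δ
  have hTcard : T.ncard ≤ δ := by
    have key : ∀ u ∈ T.toFinset,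
        (n - 1) ≤ (S.toFinset.filter (fun p : α × Fin n => p.1 = u)).card := by
      intro u hu
      rw [Set.mem_toFinset] at hu
      have himg : S.toFinset.filter (fun p : α × Fin n => p.1 = u)
          = ((A u).toFinsetᶜ).image (fun v => (u, v)) := by
        ext ⟨a, v⟩
        simp only [Finset.mem_filter, Set.mem_toFinset, Finset.mem_image, Finset.mem_compl,
          Set.mem_toFinset, hAdef, Set.mem_setOf_eq, not_not]
        constructor
        · rintro ⟨hS, rfl⟩; exact ⟨v, hS, rfl⟩
        · rintro ⟨v', hv', heq⟩
          obtain ⟨h1, h2⟩ := Prod.mk.injEq _ _ _ _ ▸ heq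
          subst h1; subst h2; exact ⟨hv', rfl⟩
      have hinj : Function.Injective (fun v : Fin n => (u, v)) := by
        intro a b h; exact congrArg Prod.snd h
      rw [himg, Finset.card_image_of_injective _ hinj, Finset.card_compl, Fintype.card_fin]
      have hAc : (A u).toFinset.card = (A u).ncard := (Set.ncard_eq_toFinset_card' _).symm
      have hu' : (A u).ncard ≤ 1 := hu
      omega
    have hsum : S.toFinset.card
        = ∑ u : α, (S.toFinset.filter (fun p : α × Fin n => p.1 = u)).card :=
      Finset.card_eq_sum_card_fiberwise (fun x _ => Finset.mem_univ _)
    have hle : T.toFinset.card * (n - 1) ≤ S.toFinset.card := by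
      have h0 := Finset.card_nsmul_le_sum _ _ _ key
      rw [smul_eq_mul] at h0
      calc T.toFinset.card * (n - 1)
          ≤ ∑ u ∈ T.toFinset, (S.toFinset.filter (fun p : α × Fin n => p.1 = u)).card := h0
        _ ≤ ∑ u : α, (S.toFinset.filter (fun p : α × Fin n => p.1 = u)).card :=
            Finset.sum_le_sum_of_subset (Finset.subset_univ _)
        _ = S.toFinset.card := hsum.symm
    have hS : S.toFinset.card = (n - 1) * δ := by
      rw [← Set.ncard_eq_toFinset_card']; exact hcard
    have hT : T.ncard = T.toFinset.card := Set.ncard_eq_toFinset_card' _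
    rw [hS] at hle
    have h1 : (n - 1) * T.toFinset.card ≤ (n - 1) * δ := by rw [mul_comm]; exact hle
    have := Nat.le_of_mul_le_mul_left h1 (by omega : 0 < n - 1)
    omega
  -- every vertex reaches some non-bad vertex
  have attach : ∀ u, ∃ w, w ∉ T ∧ Gs.Reachable u w := by
    intro u
    by_cases hu : u ∈ T
    · have hnb : ¬ (G.neighborSet u ⊆ T \ {u}) := by
        intro hsub
        have h1 : (G.neighborSet u).ncard ≤ (T \ {u}).ncard :=
          Set.ncard_le_ncard hsub (Set.toFinite _)
        have h2 : (G.neighborSet u).ncard = G.degree u := by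
          rw [← G.card_neighborSet_eq_degree u, Set.ncard_eq_toFinset_card', Set.toFinset_card]
        have h3 := G.minDegree_le_degree u
        have h4 : (T \ {u}).ncard = T.ncard - 1 := Set.ncard_diff_singleton_of_mem hu
        rw [← hδdef] at h3
        omega
      obtain ⟨w, hwN, hwT⟩ := Set.not_subset.mp hnb
      have hadj : G.Adj u w := hwN
      have hwT' : w ∉ T := fun h => hwT ⟨h, fun he => hadj.ne (Set.mem_singleton_iff.mp he).symm⟩
      exact ⟨w, hwT', (transfer u w hadj hwT').reachable⟩
    · exact ⟨u, hu, SimpleGraph.Reachable.refl u⟩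
  -- mapping reachability in induced graph on Tᶜ to Gs
  have mapreach : ∀ (a b : ↥(Tᶜ)), (G.induce Tᶜ).Reachable a b → Gs.Reachable a.1 b.1 :=
    fun a b h =>
      h.map (⟨Subtype.val, fun {a b} hab => transfer a.1 b.1 hab b.2⟩ : G.induce Tᶜ →g Gs)
  -- walk induction principle
  have walkP : ∀ {s : Set α} (P : ↥s → Prop),
      (∀ a b : ↥s, (G.induce s).Adj a b → P a → P b) →
      ∀ a b : ↥s, (G.induce s).Reachable a b → P a → P b := by
    intro s P hP a b hr
    obtain ⟨p⟩ := hr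
    induction p with
    | nil => exact id
    | cons h p ih => exact fun ha => ih (hP _ _ h ha)
  -- all non-bad vertices mutually reachable
  have main : ∀ w w', w ∉ T → w' ∉ T → Gs.Reachable w w' := by
    intro w w' hw hw'
    by_cases hC : (G.induce Tᶜ).Connected
    · exact mapreach ⟨w, hw⟩ ⟨w', hw'⟩ (hC.preconnected _ _)
    · have hsep : IsSeparating G T := Or.inr hC
      have hκ : kappa G ≤ T.ncard := Nat.sInf_le ⟨T, hsep, rfl⟩
      rw [hk] at hκ
      have hTne : T.Nonempty := by
        rw [← Set.ncard_pos]; omega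
      obtain ⟨t, ht⟩ := hTne
      have claim : ∀ z, ∀ hz : z ∉ T, ∃ z', ∃ hz' : z' ∉ T, G.Adj t z' ∧
          (G.induce Tᶜ).Reachable ⟨z', hz'⟩ ⟨z, hz⟩ := by
        intro z hz
        by_contra hno
        push_neg at hno
        set T' := T \ {t} with hT'
        have hsep' : IsSeparating G T' := by
          refine Or.inr ?_
          intro hC'
          have hzmem : z ∈ T'ᶜ := fun hmem => hz hmem.1
          have htmem : t ∈ T'ᶜ := fun hmem => hmem.2 rfl
          have hreach := hC'.preconnected ⟨z, hzmem⟩ ⟨t, htmem⟩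
          have hfin := walkP
            (s := T'ᶜ)
            (fun a => ∃ h : a.1 ∉ T, (G.induce Tᶜ).Reachable ⟨a.1, h⟩ ⟨z, hz⟩)
            ?_ ⟨z, hzmem⟩ ⟨t, htmem⟩ hreach ⟨hz, SimpleGraph.Reachable.refl _⟩
          · obtain ⟨h, _⟩ := hfin; exact h ht
          · rintro a b hab ⟨ha, hra⟩
            by_cases hb : b.1 ∈ T
            · have hbt : b.1 = t := by
                by_contra hne
                exact b.2 ⟨hb, hne⟩
              have hadj : G.Adj t a.1 := by
                have h' : G.Adj a.1 b.1 := hab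
                rw [hbt] at h'; exact h'.symm
              exact absurd hra (hno a.1 ha hadj)
            · refine ⟨hb, ?_⟩
              have hadj : (G.induce Tᶜ).Adj ⟨b.1, hb⟩ ⟨a.1, ha⟩ :=
                (show G.Adj a.1 b.1 from hab).symm
              exact hadj.reachable.trans hra
        have hκ' : kappa G ≤ T'.ncard := Nat.sInf_le ⟨T', hsep', rfl⟩
        have hcard' : T'.ncard = T.ncard - 1 := Set.ncard_diff_singleton_of_mem ht
        rw [hk] at hκ'
        omega
      obtain ⟨w₁, hw₁, hadj₁, hr₁⟩ := claim w hw
      obtain ⟨w₂, hw₂, hadj₂, hr₂⟩ := claim w' hw'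
      have e1 : Gs.Adj t w₁ := transfer t w₁ hadj₁ hw₁
      have e2 : Gs.Adj t w₂ := transfer t w₂ hadj₂ hw₂
      exact ((mapreach _ _ hr₁).symm.trans e1.symm.reachable).trans
        (e2.reachable.trans (mapreach _ _ hr₂))
  rw [SimpleGraph.connected_iff]
  refine ⟨?_, ‹Nonempty α›⟩
  intro u u'
  obtain ⟨w, hw, ru⟩ := attach u
  obtain ⟨w', hw', ru'⟩ := attach u'
  exact ru.trans ((main w w' hw hw').trans ru'.symm)
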